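/- A matrix W belongs to the subdifferential ∂Ω_θ(X) if and only if ⟨W, X⟩ = Ω_θ(X) and uᵀWv ≤ θ(u,v) for all vectors u ∈ ℝ^D, v ∈ ℝ^N. -/

import Mathlib

open Matrix Filter
open scoped ENNReal BigOperators

/-- The matrix factorization regularizer: infimum over all factorizations `X = U * Vᵀ`
(with a variable number `r` of columns) of the sum of `θ` applied to column pairs. -/
noncomputable def Omega {D N : ℕ} (θ : (Fin D → ℝ) → (Fin N → ℝ) → ℝ≥0∞)
    (X : Matrix (Fin D) (Fin N) ℝ) : ℝ≥0∞ :=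
  ⨅ (r : ℕ) (U : Matrix (Fin D) (Fin r) ℝ) (V : Matrix (Fin N) (Fin r) ℝ)
    (_ : U * Vᵀ = X), ∑ i : Fin r, θ (fun d => U d i) (fun n => V n i)

/-- `θ` is a rank-1 regularizer: positively homogeneous of degree 2, `θ(0,0) = 0`
(nonnegativity is automatic in `ℝ≥0∞`), and `θ(uₙ,vₙ) → ∞` whenever `‖uₙvₙᵀ‖_F → ∞`. -/
def IsRankOneReg {D N : ℕ} (θ : (Fin D → ℝ) → (Fin N → ℝ) → ℝ≥0∞) : Prop :=
  (∀ (α : ℝ), 0 ≤ α → ∀ u v, θ (α • u) (α • v) = ENNReal.ofReal (α ^ 2) * θ u v) ∧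
  (θ 0 0 = 0) ∧
  (∀ (u : ℕ → Fin D → ℝ) (v : ℕ → Fin N → ℝ),
    Tendsto (fun k => Real.sqrt (∑ d, ∑ m, (u k d * v k m) ^ 2)) atTop atTop →
    Tendsto (fun k => θ (u k) (v k)) atTop (nhds ⊤))

/-- The Frobenius (trace) inner product on matrices. -/
noncomputable def frobInner {D N : ℕ} (A B : Matrix (Fin D) (Fin N) ℝ) : ℝ :=
  ∑ d, ∑ n, A d n * B d n

section Aux

variable {D N : ℕ} {θ : (Fin D → ℝ) → (Fin N → ℝ) → ℝ≥0∞}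

lemma omega_le' {Z : Matrix (Fin D) (Fin N) ℝ} {r : ℕ} {U : Matrix (Fin D) (Fin r) ℝ}
    {V : Matrix (Fin N) (Fin r) ℝ} (h : U * Vᵀ = Z) :
    Omega θ Z ≤ ∑ i : Fin r, θ (fun d => U d i) (fun n => V n i) :=
  iInf_le_of_le r (iInf_le_of_le U (iInf_le_of_le V (iInf_le _ h)))

lemma omega_zero' : Omega θ 0 = 0 := by
  refine le_antisymm ?_ zero_le
  have h : (0 : Matrix (Fin D) (Fin 0) ℝ) * (0 : Matrix (Fin N) (Fin 0) ℝ)ᵀ = 0 := by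
    ext d n; simp [Matrix.mul_apply]
  simpa using omega_le' (θ := θ) h

lemma omega_vecMulVec_le' (u : Fin D → ℝ) (v : Fin N → ℝ) :
    Omega θ (vecMulVec u v) ≤ θ u v := by
  have h : (Matrix.of fun d (_ : Fin 1) => u d) * (Matrix.of fun n (_ : Fin 1) => v n)ᵀ
      = vecMulVec u v := by
    ext d n; simp [Matrix.mul_apply, vecMulVec]
  simpa using omega_le' (θ := θ) h

lemma le_coe_ennreal_iInf' {ι : Sort*} (f : ι → ℝ≥0∞) (c : EReal)
    (h : ∀ i, c ≤ (f i : EReal)) : c ≤ ((⨅ i, f i : ℝ≥0∞) : EReal) := by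
  rw [← EReal.le_of_forall_lt_iff_le]
  intro z hz
  have hz0 : (0:ℝ) ≤ z := by
    have := lt_of_le_of_lt (EReal.coe_ennreal_nonneg _) hz
    exact_mod_cast this.le
  have hlt : (⨅ i, f i) < ENNReal.ofReal z := by
    rw [← EReal.coe_ennreal_lt_coe_ennreal_iff]
    refine lt_of_lt_of_le hz ?_
    rw [EReal.coe_ennreal_ofReal]
    exact_mod_cast le_of_eq (max_eq_left hz0).symm
  obtain ⟨i, hi⟩ := iInf_lt_iff.mp hlt
  calc c ≤ (f i : EReal) := h i
    _ ≤ ((ENNReal.ofReal z : ℝ≥0∞) : EReal) := by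
        exact_mod_cast EReal.coe_ennreal_le_coe_ennreal_iff.mpr hi.le
    _ = (z : EReal) := by rw [EReal.coe_ennreal_ofReal, max_eq_left hz0]

lemma frobInner_mul' (W : Matrix (Fin D) (Fin N) ℝ) {r : ℕ} (U : Matrix (Fin D) (Fin r) ℝ)
    (V : Matrix (Fin N) (Fin r) ℝ) :
    frobInner W (U * Vᵀ) = ∑ i : Fin r, (fun d => U d i) ⬝ᵥ W *ᵥ (fun n => V n i) := by
  simp only [frobInner, Matrix.mul_apply, dotProduct, Matrix.mulVec, transpose_apply,
    Finset.mul_sum]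
  calc ∑ d : Fin D, ∑ n : Fin N, ∑ i : Fin r, W d n * (U d i * V n i)
      = ∑ d : Fin D, ∑ i : Fin r, ∑ n : Fin N, W d n * (U d i * V n i) :=
        Finset.sum_congr rfl fun d _ => Finset.sum_comm
    _ = ∑ i : Fin r, ∑ d : Fin D, ∑ n : Fin N, W d n * (U d i * V n i) :=
        Finset.sum_comm
    _ = ∑ i : Fin r, ∑ d : Fin D, ∑ n : Fin N, U d i * (W d n * V n i) := by
        refine Finset.sum_congr rfl fun i _ => Finset.sum_congr rfl fun d _ =>
          Finset.sum_congr rfl fun n _ => by ring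

lemma frobInner_vecMulVec' (W : Matrix (Fin D) (Fin N) ℝ) (u : Fin D → ℝ) (v : Fin N → ℝ) :
    frobInner W (vecMulVec u v) = u ⬝ᵥ W *ᵥ v := by
  simp only [frobInner, vecMulVec_apply, dotProduct, Matrix.mulVec, Finset.mul_sum]
  exact Finset.sum_congr rfl fun d _ => Finset.sum_congr rfl fun n _ => by ring

lemma ereal_coe_sum' {ι : Type*} (s : Finset ι) (f : ι → ℝ) :
    ((∑ i ∈ s, f i : ℝ) : EReal) = ∑ i ∈ s, (f i : EReal) :=
  map_sum (⟨⟨Real.toEReal, EReal.coe_zero⟩, EReal.coe_add⟩ : ℝ →+ EReal) f s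

lemma ereal_coe_ennreal_sum' {ι : Type*} (s : Finset ι) (f : ι → ℝ≥0∞) :
    ((∑ i ∈ s, f i : ℝ≥0∞) : EReal) = ∑ i ∈ s, ((f i : ℝ≥0∞) : EReal) :=
  map_sum (⟨⟨(↑), EReal.coe_ennreal_zero⟩, EReal.coe_ennreal_add⟩ : ℝ≥0∞ →+ EReal) f s

lemma frob_le_omega' (W : Matrix (Fin D) (Fin N) ℝ)
    (hW : ∀ (u : Fin D → ℝ) (v : Fin N → ℝ), ((u ⬝ᵥ W *ᵥ v : ℝ) : EReal) ≤ (θ u v : EReal))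
    (Z : Matrix (Fin D) (Fin N) ℝ) :
    ((frobInner W Z : ℝ) : EReal) ≤ ((Omega θ Z : ℝ≥0∞) : EReal) := by
  refine le_coe_ennreal_iInf' _ _ fun r => le_coe_ennreal_iInf' _ _ fun U =>
    le_coe_ennreal_iInf' _ _ fun V => le_coe_ennreal_iInf' _ _ fun hf => ?_
  rw [← hf, frobInner_mul', ereal_coe_sum', ereal_coe_ennreal_sum']
  exact Finset.sum_le_sum fun i _ => hW _ _

lemma omega_concat' {A B : Matrix (Fin D) (Fin N) ℝ} {r₁ r₂ : ℕ}
    {U₁ : Matrix (Fin D) (Fin r₁) ℝ} {V₁ : Matrix (Fin N) (Fin r₁) ℝ}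
    {U₂ : Matrix (Fin D) (Fin r₂) ℝ} {V₂ : Matrix (Fin N) (Fin r₂) ℝ}
    (h₁ : U₁ * V₁ᵀ = A) (h₂ : U₂ * V₂ᵀ = B) :
    Omega θ (A + B) ≤ ∑ i : Fin r₁, θ (fun d => U₁ d i) (fun n => V₁ n i)
      + ∑ i : Fin r₂, θ (fun d => U₂ d i) (fun n => V₂ n i) := by
  set e : Fin r₁ ⊕ Fin r₂ ≃ Fin (r₁ + r₂) := finSumFinEquiv
  set U : Matrix (Fin D) (Fin (r₁ + r₂)) ℝ := (fromCols U₁ U₂).submatrix id e.symm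
  set V : Matrix (Fin N) (Fin (r₁ + r₂)) ℝ := (fromCols V₁ V₂).submatrix id e.symm
  have hfact : U * Vᵀ = A + B := by
    have : Vᵀ = (fromRows V₁ᵀ V₂ᵀ).submatrix e.symm id := by
      simp [V, Matrix.transpose_submatrix, Matrix.transpose_fromCols]
    rw [this]
    show (fromCols U₁ U₂).submatrix id e.symm * (fromRows V₁ᵀ V₂ᵀ).submatrix e.symm id = A + B
    rw [Matrix.submatrix_mul_equiv, Matrix.fromCols_mul_fromRows, h₁, h₂,
      Matrix.submatrix_id_id]
  refine le_trans (omega_le' hfact) (le_of_eq ?_)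
  rw [← Equiv.sum_comp e (fun i => θ (fun d => U d i) (fun n => V n i)), Fintype.sum_sum_type]
  congr 1 <;> refine Finset.sum_congr rfl fun i _ => ?_ <;>
    simp [U, V, Matrix.fromCols]

lemma omega_add' (A B : Matrix (Fin D) (Fin N) ℝ) :
    Omega θ (A + B) ≤ Omega θ A + Omega θ B := by
  refine ENNReal.le_of_forall_pos_le_add fun ε hε hfin => ?_
  have hA : Omega θ A ≠ ⊤ := fun h => by simp [h] at hfin
  have hB : Omega θ B ≠ ⊤ := fun h => by simp [h] at hfin
  have hε2 : (ε : ℝ≥0∞) / 2 ≠ 0 := by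
    simp [ENNReal.div_eq_top, hε.ne']
  have h1 : Omega θ A < Omega θ A + ε / 2 := ENNReal.lt_add_right hA hε2
  have h2 : Omega θ B < Omega θ B + ε / 2 := ENNReal.lt_add_right hB hε2
  rw [Omega] at h1 h2
  simp only [iInf_lt_iff] at h1 h2
  obtain ⟨r₁, U₁, V₁, hf₁, hs₁⟩ := h1
  obtain ⟨r₂, U₂, V₂, hf₂, hs₂⟩ := h2
  calc Omega θ (A + B) ≤ _ + _ := omega_concat' hf₁ hf₂
    _ ≤ (Omega θ A + ε / 2) + (Omega θ B + ε / 2) := add_le_add hs₁.le hs₂.le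
    _ = Omega θ A + Omega θ B + ε := by
        rw [add_add_add_comm, ENNReal.add_halves]

end Aux

/-- `W ∈ ∂Ω_θ(X)` iff `⟨W,X⟩ = Ω_θ(X)` and `uᵀWv ≤ θ(u,v)` for all `(u,v)`. -/
theorem omega_subdifferential {D N : ℕ} (θ : (Fin D → ℝ) → (Fin N → ℝ) → ℝ≥0∞)
    (hθ : IsRankOneReg θ) (X W : Matrix (Fin D) (Fin N) ℝ) :
    (∀ Z : Matrix (Fin D) (Fin N) ℝ,
        ((Omega θ X : ℝ≥0∞) : EReal) + ((frobInner W (Z - X) : ℝ) : EReal)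
          ≤ ((Omega θ Z : ℝ≥0∞) : EReal)) ↔
    (((frobInner W X : ℝ) : EReal) = ((Omega θ X : ℝ≥0∞) : EReal) ∧
      ∀ (u : Fin D → ℝ) (v : Fin N → ℝ), ((u ⬝ᵥ W *ᵥ v : ℝ) : EReal) ≤ (θ u v : EReal)) := by
  have hfneg : frobInner W (0 - X) = -frobInner W X := by
    simp [frobInner, Finset.sum_neg_distrib]
  constructor
  · intro hsub
    -- Ω(X) is finite
    have hXtop : Omega θ X ≠ ⊤ := by
      intro h
      have h0 := hsub 0
      rw [h, omega_zero', EReal.coe_ennreal_top, EReal.top_add_coe, EReal.coe_ennreal_zero] at h0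
      exact (lt_irrefl _ (lt_of_le_of_lt h0 (by norm_num : (0:EReal) < ⊤))).elim
    obtain ⟨x, hx⟩ : ∃ x : NNReal, Omega θ X = (x : ℝ≥0∞) :=
      ⟨(Omega θ X).toNNReal, (ENNReal.coe_toNNReal hXtop).symm⟩
    have hxE : ((Omega θ X : ℝ≥0∞) : EReal) = ((x : ℝ) : EReal) := by
      rw [hx]; norm_cast
    -- the polar inequality
    have h2 : ∀ (u : Fin D → ℝ) (v : Fin N → ℝ),
        ((u ⬝ᵥ W *ᵥ v : ℝ) : EReal) ≤ (θ u v : EReal) := by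
      intro u v
      rcases eq_or_ne (θ u v) ⊤ with ht | ht
      · rw [ht, EReal.coe_ennreal_top]; exact le_top
      obtain ⟨t, hti⟩ : ∃ t : NNReal, θ u v = (t : ℝ≥0∞) :=
        ⟨(θ u v).toNNReal, (ENNReal.coe_toNNReal ht).symm⟩
      have key := hsub (X + vecMulVec u v)
      have e1 : frobInner W (X + vecMulVec u v - X) = u ⬝ᵥ W *ᵥ v := by
        rw [add_sub_cancel_left, frobInner_vecMulVec']
      have ub : ((Omega θ (X + vecMulVec u v) : ℝ≥0∞) : EReal)
          ≤ ((Omega θ X : ℝ≥0∞) : EReal) + ((θ u v : ℝ≥0∞) : EReal) := by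
        rw [← EReal.coe_ennreal_add, EReal.coe_ennreal_le_coe_ennreal_iff]
        exact le_trans (omega_add' X (vecMulVec u v))
          (add_le_add le_rfl (omega_vecMulVec_le' u v))
      rw [e1] at key
      replace key := le_trans key ub
      rw [hxE, hti] at key
      have htE : (((t : ℝ≥0∞)) : EReal) = (((t : ℝ)) : EReal) := by norm_cast
      rw [htE] at key
      have hreal : (x : ℝ) + (u ⬝ᵥ W *ᵥ v) ≤ (x : ℝ) + (t : ℝ) := by exact_mod_cast key
      rw [hti, htE]
      exact_mod_cast (by linarith : (u ⬝ᵥ W *ᵥ v) ≤ (t : ℝ))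
    refine ⟨le_antisymm (frob_le_omega' W h2 X) ?_, h2⟩
    -- Ω(X) ≤ ⟨W, X⟩
    have h0 := hsub 0
    rw [omega_zero', EReal.coe_ennreal_zero, hfneg, hxE] at h0
    have h0' : (x : ℝ) + (-(frobInner W X)) ≤ (0 : ℝ) := by exact_mod_cast h0
    rw [hxE]
    exact_mod_cast (by linarith : (x : ℝ) ≤ frobInner W X)
  · rintro ⟨h1, h2⟩ Z
    have hadd : frobInner W X + frobInner W (Z - X) = frobInner W Z := by
      simp only [frobInner, Matrix.sub_apply, mul_sub, Finset.sum_sub_distrib]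
      ring
    calc ((Omega θ X : ℝ≥0∞) : EReal) + ((frobInner W (Z - X) : ℝ) : EReal)
        = ((frobInner W X : ℝ) : EReal) + ((frobInner W (Z - X) : ℝ) : EReal) := by rw [h1]
      _ = ((frobInner W Z : ℝ) : EReal) := by rw [← EReal.coe_add, hadd]
      _ ≤ ((Omega θ Z : ℝ≥0∞) : EReal) := frob_le_omega' W h2 Z
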